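/- One-step recursion inequality for set-valued derivative iterations (the key step in the proof of Theorem 4.1): let 0 ≤ q < 1, let 𝒜, ℬ ⊆ ℝ^{d×(d+m)} be nonempty bounded sets of real block matrices with ‖𝒜₁‖_sup ≤ q, and let 𝒟, 𝒮 ⊆ ℝ^{d×m} be nonempty bounded sets. Then gap(𝒜(𝒟), ℬ(𝒮)) ≤ q · gap(𝒟, 𝒮) + (1 + ‖𝒮‖_sup) · gap(𝒜, ℬ). -/

import Mathlib

open scoped Matrix.Norms.L2Operator

/-- The excess (gap) of a set `𝒜` over a set `ℬ` in a normed additive group: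
`gap 𝒜 ℬ = sup_{A ∈ 𝒜} inf_{B ∈ ℬ} ‖A - B‖`. -/
noncomputable def gap {E : Type*} [NormedAddCommGroup E] (𝒜 ℬ : Set E) : ℝ :=
  ⨆ A : 𝒜, ⨅ B : ℬ, ‖(A : E) - (B : E)‖

/-- `‖𝒜‖_sup = sup_{A ∈ 𝒜} ‖A‖`. -/
noncomputable def supNorm {E : Type*} [NormedAddCommGroup E] (𝒜 : Set E) : ℝ :=
  ⨆ A : 𝒜, ‖(A : E)‖

/-- First block `A₁ ∈ ℝ^{n×p₁}` of a block matrix `A = [A₁, A₂] ∈ ℝ^{n×(p₁+p₂)}`. -/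
def blk1 {n p₁ p₂ : ℕ} (A : Matrix (Fin n) (Fin (p₁ + p₂)) ℝ) :
    Matrix (Fin n) (Fin p₁) ℝ :=
  A.submatrix id (Fin.castAdd p₂)

/-- Second block `A₂ ∈ ℝ^{n×p₂}` of a block matrix `A = [A₁, A₂] ∈ ℝ^{n×(p₁+p₂)}`. -/
def blk2 {n p₁ p₂ : ℕ} (A : Matrix (Fin n) (Fin (p₁ + p₂)) ℝ) :
    Matrix (Fin n) (Fin p₂) ℝ :=
  A.submatrix id (Fin.natAdd p₁)

/-- The affine action `𝒜(𝒳) = {A₁ X + A₂ | [A₁, A₂] ∈ 𝒜, X ∈ 𝒳}` of a set of block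
matrices `𝒜 ⊆ ℝ^{n×(p₁+p₂)}` on a set of matrices `𝒳 ⊆ ℝ^{p₁×p₂}`. -/
def affAct {n p₁ p₂ : ℕ} (𝒜 : Set (Matrix (Fin n) (Fin (p₁ + p₂)) ℝ))
    (𝒳 : Set (Matrix (Fin p₁) (Fin p₂) ℝ)) : Set (Matrix (Fin n) (Fin p₂) ℝ) :=
  {Y | ∃ A ∈ 𝒜, ∃ X ∈ 𝒳, Y = blk1 A * X + blk2 A}

lemma norm_blk1_le {n p₁ p₂ : ℕ} (M : Matrix (Fin n) (Fin (p₁ + p₂)) ℝ) :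
    ‖blk1 M‖ ≤ ‖M‖ := by
  rw [Matrix.l2_opNorm_def]
  refine ContinuousLinearMap.opNorm_le_bound _ (norm_nonneg M) fun x => ?_
  set y : EuclideanSpace ℝ (Fin (p₁ + p₂)) :=
    (WithLp.equiv 2 _).symm (Fin.append (x : Fin p₁ → ℝ) 0) with hy
  have hny : ‖y‖ = ‖x‖ := by
    simp only [EuclideanSpace.norm_eq, hy]
    congr 1
    rw [Fin.sum_univ_add]
    simp [WithLp.equiv_symm_apply, PiLp.toLp_apply]
  have hmv : Matrix.mulVec (blk1 M) (x : Fin p₁ → ℝ)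
      = Matrix.mulVec M (y : Fin (p₁ + p₂) → ℝ) := by
    ext i
    simp only [Matrix.mulVec, dotProduct, blk1, Matrix.submatrix_apply, id]
    rw [Fin.sum_univ_add]
    simp [hy, WithLp.equiv_symm_apply, PiLp.toLp_apply]
  calc ‖(Matrix.toEuclideanLin.trans LinearMap.toContinuousLinearMap) (blk1 M) x‖
      = ‖(EuclideanSpace.equiv (Fin n) ℝ).symm
          (Matrix.mulVec M (y : Fin (p₁ + p₂) → ℝ))‖ := by rw [← hmv]; rfl
    _ ≤ ‖M‖ * ‖y‖ := Matrix.l2_opNorm_mulVec M y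
    _ = ‖M‖ * ‖x‖ := by rw [hny]

lemma norm_blk2_le {n p₁ p₂ : ℕ} (M : Matrix (Fin n) (Fin (p₁ + p₂)) ℝ) :
    ‖blk2 M‖ ≤ ‖M‖ := by
  rw [Matrix.l2_opNorm_def]
  refine ContinuousLinearMap.opNorm_le_bound _ (norm_nonneg M) fun x => ?_
  set y : EuclideanSpace ℝ (Fin (p₁ + p₂)) :=
    (WithLp.equiv 2 _).symm (Fin.append 0 (x : Fin p₂ → ℝ)) with hy
  have hny : ‖y‖ = ‖x‖ := by
    simp only [EuclideanSpace.norm_eq, hy]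
    congr 1
    rw [Fin.sum_univ_add]
    simp [WithLp.equiv_symm_apply, PiLp.toLp_apply]
  have hmv : Matrix.mulVec (blk2 M) (x : Fin p₂ → ℝ)
      = Matrix.mulVec M (y : Fin (p₁ + p₂) → ℝ) := by
    ext i
    simp only [Matrix.mulVec, dotProduct, blk2, Matrix.submatrix_apply, id]
    rw [Fin.sum_univ_add]
    simp [hy, WithLp.equiv_symm_apply, PiLp.toLp_apply]
  calc ‖(Matrix.toEuclideanLin.trans LinearMap.toContinuousLinearMap) (blk2 M) x‖
      = ‖(EuclideanSpace.equiv (Fin n) ℝ).symm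
          (Matrix.mulVec M (y : Fin (p₁ + p₂) → ℝ))‖ := by rw [← hmv]; rfl
    _ ≤ ‖M‖ * ‖y‖ := Matrix.l2_opNorm_mulVec M y
    _ = ‖M‖ * ‖x‖ := by rw [hny]

set_option maxHeartbeats 2000000 in
/-- One-step recursion inequality for set-valued derivative iterations:
`gap(𝒜(𝒟), ℬ(𝒮)) ≤ q · gap(𝒟, 𝒮) + (1 + ‖𝒮‖_sup) · gap(𝒜, ℬ)`. -/
theorem gap_affAct_step {d m : ℕ} (q : ℝ) (hq0 : 0 ≤ q) (hq1 : q < 1)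
    (𝒜 ℬ : Set (Matrix (Fin d) (Fin (d + m)) ℝ))
    (𝒟 𝒮 : Set (Matrix (Fin d) (Fin m) ℝ))
    (h𝒜ne : 𝒜.Nonempty) (hℬne : ℬ.Nonempty) (h𝒟ne : 𝒟.Nonempty) (h𝒮ne : 𝒮.Nonempty)
    (h𝒜b : Bornology.IsBounded 𝒜) (hℬb : Bornology.IsBounded ℬ)
    (h𝒟b : Bornology.IsBounded 𝒟) (h𝒮b : Bornology.IsBounded 𝒮)
    (h𝒜₁ : supNorm (blk1 '' 𝒜) ≤ q) :
    gap (affAct 𝒜 𝒟) (affAct ℬ 𝒮) ≤ q * gap 𝒟 𝒮 + (1 + supNorm 𝒮) * gap 𝒜 ℬ := by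
  obtain ⟨C𝒜, hC𝒜⟩ := isBounded_iff_forall_norm_le.mp h𝒜b
  obtain ⟨Cℬ, hCℬ⟩ := isBounded_iff_forall_norm_le.mp hℬb
  obtain ⟨C𝒟, hC𝒟⟩ := isBounded_iff_forall_norm_le.mp h𝒟b
  obtain ⟨C𝒮, hC𝒮⟩ := isBounded_iff_forall_norm_le.mp h𝒮b
  obtain ⟨S₀, hS₀⟩ := h𝒮ne
  obtain ⟨B₀, hB₀⟩ := hℬne
  haveI : Nonempty ↥𝒮 := ⟨⟨S₀, hS₀⟩⟩
  haveI : Nonempty ↥ℬ := ⟨⟨B₀, hB₀⟩⟩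
  haveI : Nonempty ↥(affAct 𝒜 𝒟) := by
    obtain ⟨A₀, hA₀⟩ := h𝒜ne
    obtain ⟨X₀, hX₀⟩ := h𝒟ne
    exact ⟨⟨blk1 A₀ * X₀ + blk2 A₀, ⟨A₀, hA₀, X₀, hX₀, rfl⟩⟩⟩
  -- bounded-above facts
  have hbdd𝒮 : BddAbove (Set.range fun S : ↥𝒮 => ‖(S : Matrix (Fin d) (Fin m) ℝ)‖) :=
    ⟨C𝒮, by rintro _ ⟨S, rfl⟩; exact hC𝒮 S S.2⟩
  have hSsup : ∀ S : ↥𝒮, ‖(S : Matrix (Fin d) (Fin m) ℝ)‖ ≤ supNorm 𝒮 :=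
    fun S => le_ciSup hbdd𝒮 S
  have hSnn : 0 ≤ supNorm 𝒮 := le_trans (norm_nonneg _) (hSsup ⟨S₀, hS₀⟩)
  -- the inner infima are bounded below by 0
  have hbb : ∀ (X : Matrix (Fin d) (Fin m) ℝ),
      BddBelow (Set.range fun S : ↥𝒮 => ‖X - (S : Matrix (Fin d) (Fin m) ℝ)‖) :=
    fun X => ⟨0, by rintro _ ⟨S, rfl⟩; exact norm_nonneg _⟩
  have hbbB : ∀ (A : Matrix (Fin d) (Fin (d + m)) ℝ),
      BddBelow (Set.range fun B : ↥ℬ => ‖A - (B : Matrix (Fin d) (Fin (d + m)) ℝ)‖) :=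
    fun A => ⟨0, by rintro _ ⟨B, rfl⟩; exact norm_nonneg _⟩
  -- inner infima over 𝒟 are bounded by gap 𝒟 𝒮
  have hgapDS : ∀ X ∈ 𝒟, (⨅ S : ↥𝒮, ‖X - (S : Matrix (Fin d) (Fin m) ℝ)‖) ≤ gap 𝒟 𝒮 := by
    intro X hX
    refine le_ciSup (f := fun X : ↥𝒟 => ⨅ S : ↥𝒮, ‖(X : Matrix (Fin d) (Fin m) ℝ) - S‖)
      ⟨C𝒟 + ‖S₀‖, ?_⟩ ⟨X, hX⟩
    rintro _ ⟨X', rfl⟩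
    refine le_trans (ciInf_le (hbb _) ⟨S₀, hS₀⟩) ?_
    refine le_trans (norm_sub_le _ _) (add_le_add_left (hC𝒟 _ X'.2) _)
  have hgapAB : ∀ A ∈ 𝒜, (⨅ B : ↥ℬ, ‖A - (B : Matrix (Fin d) (Fin (d + m)) ℝ)‖) ≤ gap 𝒜 ℬ := by
    intro A hA
    refine le_ciSup (f := fun A : ↥𝒜 => ⨅ B : ↥ℬ, ‖(A : Matrix (Fin d) (Fin (d + m)) ℝ) - B‖)
      ⟨C𝒜 + ‖B₀‖, ?_⟩ ⟨A, hA⟩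
    rintro _ ⟨A', rfl⟩
    refine le_trans (ciInf_le (hbbB _) ⟨B₀, hB₀⟩) ?_
    refine le_trans (norm_sub_le _ _) (add_le_add_left (hC𝒜 _ A'.2) _)
  -- norm of blk1 of elements of 𝒜 is at most q
  have hblk1q : ∀ A ∈ 𝒜, ‖blk1 A‖ ≤ q := by
    intro A hA
    refine le_trans ?_ h𝒜₁
    refine le_ciSup (f := fun M : ↥(blk1 '' 𝒜) => ‖(M : Matrix (Fin d) (Fin d) ℝ)‖)
      ⟨C𝒜, ?_⟩ ⟨blk1 A, ⟨A, hA, rfl⟩⟩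
    rintro _ ⟨⟨_, ⟨A', hA', rfl⟩⟩, rfl⟩
    exact le_trans (norm_blk1_le A') (hC𝒜 _ hA')
  -- main estimate
  refine ciSup_le fun Y => ?_
  obtain ⟨A, hA, X, hX, hY⟩ := Y.2
  refine le_of_forall_pos_le_add fun ε hε => ?_
  have hc : (0:ℝ) < q + (1 + supNorm 𝒮) := by linarith
  set δ := ε / (q + (1 + supNorm 𝒮)) with hδdef
  have hδ : 0 < δ := div_pos hε hc
  obtain ⟨S, hS⟩ := exists_lt_of_ciInf_lt
    (lt_add_of_pos_right (⨅ S : ↥𝒮, ‖X - (S : Matrix (Fin d) (Fin m) ℝ)‖) hδ)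
  obtain ⟨B, hB⟩ := exists_lt_of_ciInf_lt
    (lt_add_of_pos_right (⨅ B : ↥ℬ, ‖A - (B : Matrix (Fin d) (Fin (d + m)) ℝ)‖) hδ)
  have hmem : blk1 (B : Matrix (Fin d) (Fin (d + m)) ℝ) * (S : Matrix (Fin d) (Fin m) ℝ)
      + blk2 (B : Matrix (Fin d) (Fin (d + m)) ℝ) ∈ affAct ℬ 𝒮 :=
    ⟨(B : Matrix (Fin d) (Fin (d + m)) ℝ), B.2, (S : Matrix (Fin d) (Fin m) ℝ), S.2, rfl⟩
  have hbbZ : BddBelow (Set.range fun Z : ↥(affAct ℬ 𝒮) =>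
      ‖(Y : Matrix (Fin d) (Fin m) ℝ) - (Z : Matrix (Fin d) (Fin m) ℝ)‖) :=
    ⟨0, by rintro _ ⟨Z, rfl⟩; exact norm_nonneg _⟩
  have h1 : (⨅ Z : ↥(affAct ℬ 𝒮), ‖(Y : Matrix (Fin d) (Fin m) ℝ) - Z‖)
      ≤ ‖(Y : Matrix (Fin d) (Fin m) ℝ) - (blk1 (B : Matrix (Fin d) (Fin (d + m)) ℝ)
            * (S : Matrix (Fin d) (Fin m) ℝ)
          + blk2 (B : Matrix (Fin d) (Fin (d + m)) ℝ))‖ :=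
    ciInf_le (f := fun Z : ↥(affAct ℬ 𝒮) =>
      ‖(Y : Matrix (Fin d) (Fin m) ℝ) - (Z : Matrix (Fin d) (Fin m) ℝ)‖) hbbZ ⟨_, hmem⟩
  -- key norm bound
  have hsplit : (Y : Matrix (Fin d) (Fin m) ℝ)
      - (blk1 (B : Matrix (Fin d) (Fin (d + m)) ℝ) * (S : Matrix (Fin d) (Fin m) ℝ)
        + blk2 (B : Matrix (Fin d) (Fin (d + m)) ℝ))
      = blk1 A * (X - (S : Matrix (Fin d) (Fin m) ℝ)) + (blk1 A - blk1 (B : Matrix (Fin d) (Fin (d + m)) ℝ)) * (S : Matrix (Fin d) (Fin m) ℝ)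
        + (blk2 A - blk2 (B : Matrix (Fin d) (Fin (d + m)) ℝ)) := by
    rw [hY, Matrix.mul_sub, Matrix.sub_mul]; abel
  have hblkd1 : blk1 A - blk1 (B : Matrix (Fin d) (Fin (d + m)) ℝ)
      = blk1 (A - (B : Matrix (Fin d) (Fin (d + m)) ℝ)) := rfl
  have hblkd2 : blk2 A - blk2 (B : Matrix (Fin d) (Fin (d + m)) ℝ)
      = blk2 (A - (B : Matrix (Fin d) (Fin (d + m)) ℝ)) := rfl
  have hAB : (0:ℝ) ≤ ‖A - (B : Matrix (Fin d) (Fin (d + m)) ℝ)‖ := norm_nonneg _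
  have key : ‖(Y : Matrix (Fin d) (Fin m) ℝ)
      - (blk1 (B : Matrix (Fin d) (Fin (d + m)) ℝ) * (S : Matrix (Fin d) (Fin m) ℝ)
        + blk2 (B : Matrix (Fin d) (Fin (d + m)) ℝ))‖
      ≤ q * ‖X - (S : Matrix (Fin d) (Fin m) ℝ)‖
        + ‖A - (B : Matrix (Fin d) (Fin (d + m)) ℝ)‖ * ‖(S : Matrix (Fin d) (Fin m) ℝ)‖
        + ‖A - (B : Matrix (Fin d) (Fin (d + m)) ℝ)‖ := by
    rw [hsplit]
    refine le_trans (norm_add_le _ _) ?_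
    refine add_le_add (le_trans (norm_add_le _ _) (add_le_add ?_ ?_)) ?_
    · exact le_trans (Matrix.l2_opNorm_mul _ _)
        (mul_le_mul_of_nonneg_right (hblk1q A hA) (norm_nonneg _))
    · rw [hblkd1]
      exact le_trans (Matrix.l2_opNorm_mul _ _)
        (mul_le_mul_of_nonneg_right (norm_blk1_le _) (norm_nonneg _))
    · rw [hblkd2]; exact norm_blk2_le _
  -- combine
  have hXS : ‖X - (S : Matrix (Fin d) (Fin m) ℝ)‖ ≤ gap 𝒟 𝒮 + δ :=
    le_trans hS.le (add_le_add_left (hgapDS X hX) δ)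
  have hABgap : ‖A - (B : Matrix (Fin d) (Fin (d + m)) ℝ)‖ ≤ gap 𝒜 ℬ + δ :=
    le_trans hB.le (add_le_add_left (hgapAB A hA) δ)
  have hGnn : 0 ≤ gap 𝒜 ℬ + δ := le_trans hAB hABgap
  have hp1 : q * ‖X - (S : Matrix (Fin d) (Fin m) ℝ)‖ ≤ q * (gap 𝒟 𝒮 + δ) :=
    mul_le_mul_of_nonneg_left hXS hq0
  have hp2 : ‖A - (B : Matrix (Fin d) (Fin (d + m)) ℝ)‖ * ‖(S : Matrix (Fin d) (Fin m) ℝ)‖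
      ≤ (gap 𝒜 ℬ + δ) * supNorm 𝒮 :=
    mul_le_mul hABgap (hSsup S) (norm_nonneg _) hGnn
  have hδε : (q + (1 + supNorm 𝒮)) * δ = ε := by
    rw [hδdef, mul_div_cancel₀ _ (ne_of_gt hc)]
  calc (⨅ Z : ↥(affAct ℬ 𝒮), ‖(Y : Matrix (Fin d) (Fin m) ℝ) - Z‖)
      ≤ q * (gap 𝒟 𝒮 + δ) + (gap 𝒜 ℬ + δ) * supNorm 𝒮 + (gap 𝒜 ℬ + δ) := by
        refine le_trans h1 (le_trans key ?_)
        exact add_le_add (add_le_add hp1 hp2) hABgap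
    _ = q * gap 𝒟 𝒮 + (1 + supNorm 𝒮) * gap 𝒜 ℬ + (q + (1 + supNorm 𝒮)) * δ := by ring
    _ = q * gap 𝒟 𝒮 + (1 + supNorm 𝒮) * gap 𝒜 ℬ + ε := by rw [hδε]
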